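/- Let λ > 0, x ∈ [0,1], α ∈ (0,1], and 0 < θ₁ < θ₁'. Let θ₀ and θ₀' denote, respectively, the unique positive fixed points of the maps t ↦ α·λ(t+θ₁)/(1+λ(t+θ₁)) + x(1-α)·λt/(1+λt) and t ↦ α·λ(t+θ₁')/(1+λ(t+θ₁')) + x(1-α)·λt/(1+λt). Then θ₀ < θ₀'. In words, the steady-state prevalence of the truth is strictly increasing in the prevalence of the rumor. -/

import Mathlib

/-- **Truth prevalence is strictly increasing in rumor prevalence.** For `λ > 0`, `x ∈ [0,1]`,
`α ∈ (0,1]` and rumor prevalences `0 < θ₁ < θ₁'`, if `θ₀` and `θ₀'` are positive fixed points of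
`t ↦ α·λ(t+θ₁)/(1+λ(t+θ₁)) + x(1-α)·λt/(1+λt)` and
`t ↦ α·λ(t+θ₁')/(1+λ(t+θ₁')) + x(1-α)·λt/(1+λt)` respectively, then `θ₀ < θ₀'`. -/
theorem truth_increasing_in_rumor (lam x α θ1 θ1' θ0 θ0' : ℝ) (hlam : 0 < lam)
    (hx : x ∈ Set.Icc (0 : ℝ) 1) (hα : α ∈ Set.Ioc (0 : ℝ) 1)
    (h1 : 0 < θ1) (h11 : θ1 < θ1')
    (h0 : 0 < θ0)
    (hfix : α * (lam * (θ0 + θ1) / (1 + lam * (θ0 + θ1))) +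
      x * (1 - α) * (lam * θ0 / (1 + lam * θ0)) = θ0)
    (h0' : 0 < θ0')
    (hfix' : α * (lam * (θ0' + θ1') / (1 + lam * (θ0' + θ1'))) +
      x * (1 - α) * (lam * θ0' / (1 + lam * θ0')) = θ0') :
    θ0 < θ0' := by
  obtain ⟨hx0, hx1⟩ := hx
  obtain ⟨hα0, hα1⟩ := hα
  by_contra hcon
  push_neg at hcon
  have d1 : (0:ℝ) < 1 + lam * (θ0 + θ1) := by nlinarith
  have d2 : (0:ℝ) < 1 + lam * θ0 := by nlinarith
  have d3 : (0:ℝ) < 1 + lam * (θ0' + θ1) := by nlinarith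
  have d4 : (0:ℝ) < 1 + lam * θ0' := by nlinarith
  have d5 : (0:ℝ) < 1 + lam * (θ0' + θ1') := by nlinarith
  have hc : (0:ℝ) ≤ x * (1 - α) := by nlinarith
  -- the map is strictly increasing in θ1
  have hA : lam * (θ0' + θ1) / (1 + lam * (θ0' + θ1)) <
      lam * (θ0' + θ1') / (1 + lam * (θ0' + θ1')) := by
    rw [div_lt_div_iff₀ d3 d5]; nlinarith
  have key' : α * (lam * (θ0' + θ1) / (1 + lam * (θ0' + θ1))) +
      x * (1 - α) * (lam * θ0' / (1 + lam * θ0')) < θ0' := by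
    have := mul_lt_mul_of_pos_left hA hα0
    linarith [hfix']
  rcases eq_or_lt_of_le hcon with heq | hlt
  · rw [heq] at key'; linarith
  · -- strict case θ0' < θ0 : use that H(t)/t is decreasing
    have hAB : lam * (θ0 + θ1) / (1 + lam * (θ0 + θ1)) * θ0' <
        lam * (θ0' + θ1) / (1 + lam * (θ0' + θ1)) * θ0 := by
      have hsub : 0 < θ0 - θ0' := by linarith
      rw [div_mul_eq_mul_div, div_mul_eq_mul_div, div_lt_div_iff₀ d1 d3]
      nlinarith [mul_pos hlam (mul_pos h1 hsub),
        mul_pos (mul_pos hlam hlam)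
          (mul_pos (mul_pos (by linarith : (0:ℝ) < θ0 + θ1)
            (by linarith : (0:ℝ) < θ0' + θ1)) hsub)]
    have hB : lam * θ0 / (1 + lam * θ0) * θ0' ≤
        lam * θ0' / (1 + lam * θ0') * θ0 := by
      have hsub : 0 < θ0 - θ0' := by linarith
      rw [div_mul_eq_mul_div, div_mul_eq_mul_div, div_le_div_iff₀ d2 d4]
      nlinarith [mul_pos (mul_pos hlam hlam) (mul_pos (mul_pos h0 h0') hsub)]
    have e1 := congrArg (· * θ0') hfix
    have e2 := mul_lt_mul_of_pos_right key' h0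
    nlinarith [mul_lt_mul_of_pos_left hAB hα0, mul_le_mul_of_nonneg_left hB hc]
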